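/- (Theorem 2) Suppose Assumptions 1 and 2 hold. Then the static signal μ_S = μ_S^max minimizes the infected proportion at the stationary Nash equilibrium: the triple (y_EE(1, 0, μ_S^max), 1, 0) is a stationary Nash equilibrium for signal μ_S^max, and for every μ_S ∈ [0,1] and every stationary Nash equilibrium (y*, z_S*, z_I*) for signal μ_S, one has y* ≥ y_EE(1, 0, μ_S^max). -/

import Mathlib

/-- Effective infection rate β_eff(z_S, z_I, μ_S). -/
noncomputable def betaEff (a bP bU zS zI m : ℝ) : ℝ :=
  (bP + (bU - bP) * zI) * (a + (1 - a) * (zS * m + zI * (1 - m)))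

/-- Endemic infection level y_EE(z_S, z_I, μ_S). -/
noncomputable def yEE (a gam bP bU zS zI m : ℝ) : ℝ :=
  1 - gam / betaEff a bP bU zS zI m

/-- The function h(z_I, μ_S). -/
noncomputable def hFun (a gam bP bU L CP zI m : ℝ) : ℝ :=
  (1 - a) * L * (bP + (bU - bP) * zI) * yEE a gam bP bU 1 zI m - CP

/-- The function g(z_I, μ_S). -/
noncomputable def gFun (a gam bP bU L CP CU zI m : ℝ) : ℝ :=
  yEE a gam bP bU 1 zI m * (CU - CP)
    - (1 - m) * (1 - yEE a gam bP bU 1 zI m) * (-(hFun a gam bP bU L CP zI m))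

/-- Expected-utility difference ΔU[S̄]. -/
noncomputable def dUS (a bP bU L CP y zI : ℝ) : ℝ :=
  (1 - a) * L * (bP + (bU - bP) * zI) * y - CP

/-- Expected-utility difference ΔU[Ī]. -/
noncomputable def dUI (a bP bU L CP CU m y zI : ℝ) : ℝ :=
  ((1 - m) * (1 - y) / (y + (1 - m) * (1 - y))) *
    ((1 - a) * L * (bP + (bU - bP) * zI) * y - CU) + CU - CP

/-- Stationary Nash equilibrium for signal μ_S = m. -/
def IsSNE (a gam bP bU L CP CU m y zS zI : ℝ) : Prop :=
  y ∈ Set.Ioo (0:ℝ) 1 ∧ zS ∈ Set.Icc (0:ℝ) 1 ∧ zI ∈ Set.Icc (0:ℝ) 1 ∧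
  gam < betaEff a bP bU zS zI m ∧
  y = yEE a gam bP bU zS zI m ∧
  (0 < dUS a bP bU L CP y zI → zS = 0) ∧
  (dUS a bP bU L CP y zI < 0 → zS = 1) ∧
  (0 < dUI a bP bU L CP CU m y zI → zI = 0) ∧
  (dUI a bP bU L CP CU m y zI < 0 → zI = 1)

/-- Characterization of μ_S^max. -/
def IsMuMax (a gam bP bU L CP CU mmax : ℝ) : Prop :=
  (0 ≤ gFun a gam bP bU L CP CU 0 0 ∧ mmax = 0) ∨
  (gFun a gam bP bU L CP CU 0 0 < 0 ∧ mmax ∈ Set.Ioo (0:ℝ) 1 ∧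
    gFun a gam bP bU L CP CU 0 mmax = 0)

/-- The threshold μ_S^min. -/
noncomputable def muMin (a gam bU L CP CU : ℝ) : ℝ :=
  1 - (bU - gam) * (CU - CP) / (gam * (CP - (1 - a) * L * (bU - gam)))

lemma keyD (u p B c k CP : ℝ) (hc : 0 < c) (hcp : c ≤ p) (hpB : p ≤ B) (hBu : B ≤ u)
    (hk : 0 ≤ k) (hCP : k * u < CP) (hp : 0 < p) :
    (u - B) * B * (p - c) * (CP - k * p) ≤ (u - p) * p * (B - c) * (CP - k * B) := by
  set A : ℝ := (p - c) * (CP - k * p) - (u - p) * p * k with hA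
  have hpu : p ≤ u := hpB.trans hBu
  have hkup : 0 ≤ k * (u - p) := mul_nonneg hk (by linarith)
  have hQp : 0 ≤ A * p + (u - p) * c * CP := by
    have e : A * p + (u - p) * c * CP
        = p * (p - c) * (CP - k * u) + (u - p) * c * (CP - k * p) := by rw [hA]; ring
    rw [e]
    have h1 : 0 ≤ p * (p - c) * (CP - k * u) :=
      mul_nonneg (mul_nonneg hp.le (by linarith)) (by linarith)
    have h2 : 0 ≤ (u - p) * c * (CP - k * p) :=
      mul_nonneg (mul_nonneg (by linarith) hc.le) (by nlinarith)
    linarith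
  have hQu : 0 ≤ A * u + (u - p) * c * CP := by
    have e : A * u + (u - p) * c * CP = p * (u - c) * (CP - k * u) := by rw [hA]; ring
    rw [e]
    exact mul_nonneg (mul_nonneg hp.le (by linarith)) (by linarith)
  have hQB : 0 ≤ A * B + (u - p) * c * CP := by
    rcases le_or_gt 0 A with h | h
    · nlinarith [mul_le_mul_of_nonneg_left hpB h]
    · nlinarith [mul_le_mul_of_nonpos_left hBu h.le]
  have hid : (u - p) * p * (B - c) * (CP - k * B) - (u - B) * B * (p - c) * (CP - k * p)
      = (B - p) * (A * B + (u - p) * c * CP) := by rw [hA]; ring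
  nlinarith [mul_nonneg (sub_nonneg.2 hpB) hQB]

set_option maxHeartbeats 2000000 in
theorem stmt18
    (a gam bP bU L CP CU : ℝ)
    (ha : a ∈ Set.Ioo (0:ℝ) 1) (hgam : gam ∈ Set.Ioo (0:ℝ) 1)
    (hbP : 0 < bP) (hbPU : bP < bU) (hbU1 : bU < 1)
    (hL : 0 < L) (hCP : 0 < CP) (hCPU : CP < CU)
    (hA1 : gam < a * bP)
    (hA2 : (1 - a) * L * (bU - gam) < CP)
    (mmax : ℝ) (hmmax : IsMuMax a gam bP bU L CP CU mmax) :
    IsSNE a gam bP bU L CP CU mmax (yEE a gam bP bU 1 0 mmax) 1 0 ∧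
    ∀ m ∈ Set.Icc (0:ℝ) 1, ∀ y zS zI : ℝ,
      IsSNE a gam bP bU L CP CU m y zS zI →
        yEE a gam bP bU 1 0 mmax ≤ y := by
  obtain ⟨ha0, ha1⟩ := ha
  obtain ⟨hg0, hg1⟩ := hgam
  have haL : (0:ℝ) ≤ (1 - a) * L := by nlinarith
  have hmm0 : 0 ≤ mmax := by
    rcases hmmax with ⟨_, h⟩ | ⟨_, ⟨h, _⟩, _⟩ <;> [exact h.ge; exact h.le]
  have hmm1 : mmax ≤ 1 := by
    rcases hmmax with ⟨_, h⟩ | ⟨_, ⟨_, h⟩, _⟩ <;> [exact h.le.trans zero_le_one; exact h.le]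
  have hs0a : a ≤ a + (1 - a) * mmax := by
    have := mul_nonneg (by linarith : (0:ℝ) ≤ 1 - a) hmm0
    linarith
  have hs01 : a + (1 - a) * mmax ≤ 1 := by
    have := mul_le_mul_of_nonneg_left hmm1 (by linarith : (0:ℝ) ≤ 1 - a)
    linarith
  have hb1pos : (0:ℝ) < bP * (a + (1 - a) * mmax) :=
    mul_pos hbP (lt_of_lt_of_le ha0 hs0a)
  have hgb1 : gam < bP * (a + (1 - a) * mmax) := by
    have := mul_le_mul_of_nonneg_left hs0a hbP.le
    nlinarith [this, hA1]
  have hbeq1 : betaEff a bP bU 1 0 mmax = bP * (a + (1 - a) * mmax) := by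
    unfold betaEff; ring
  obtain ⟨y0, hy0def⟩ : ∃ t : ℝ, t = 1 - gam / (bP * (a + (1 - a) * mmax)) := ⟨_, rfl⟩
  have hY : yEE a gam bP bU 1 0 mmax = y0 := by unfold yEE; rw [hbeq1, hy0def]
  have hy0pos : 0 < y0 := by
    have : gam / (bP * (a + (1 - a) * mmax)) < 1 := (div_lt_one hb1pos).2 hgb1
    rw [hy0def]; linarith
  have hy0lt1 : y0 < 1 := by
    have : 0 < gam / (bP * (a + (1 - a) * mmax)) := div_pos hg0 hb1pos
    rw [hy0def]; linarith
  have hbPy0 : bP * y0 ≤ bP - gam := by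
    have hne2 : a + (1 - a) * mmax ≠ 0 := ne_of_gt (by linarith)
    have he : bP * y0 = bP - gam / (a + (1 - a) * mmax) := by
      rw [hy0def]
      field_simp [hbP.ne', hne2]
    have h2 : gam ≤ gam / (a + (1 - a) * mmax) := by
      rw [le_div_iff₀ (by linarith : (0:ℝ) < a + (1 - a) * mmax)]
      exact mul_le_of_le_one_right hg0.le hs01
    linarith
  have hCPy0 : (1 - a) * L * bP * y0 < CP := by
    have h1 : (1 - a) * L * (bP * y0) ≤ (1 - a) * L * (bP - gam) :=
      mul_le_mul_of_nonneg_left hbPy0 haL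
    have h2 : (1 - a) * L * (bP - gam) ≤ (1 - a) * L * (bU - gam) :=
      mul_le_mul_of_nonneg_left (by linarith) haL
    linarith
  have hgf : gFun a gam bP bU L CP CU 0 mmax
      = y0 * (CU - CP) - (1 - mmax) * (1 - y0) * (CP - (1 - a) * L * bP * y0) := by
    unfold gFun hFun; rw [hY]; ring
  have hgfge : 0 ≤ gFun a gam bP bU L CP CU 0 mmax := by
    rcases hmmax with ⟨h, hme⟩ | ⟨_, _, h⟩
    · rw [hme]; exact h
    · exact le_of_eq h.symm
  constructor
  · -- Part 1: the SNE
    have hdUSneg : dUS a bP bU L CP (yEE a gam bP bU 1 0 mmax) 0 < 0 := by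
      unfold dUS; rw [hY]
      have e : (1 - a) * L * (bP + (bU - bP) * 0) * y0 - CP
          = (1 - a) * L * bP * y0 - CP := by ring
      rw [e]; linarith
    have hDpos : 0 < y0 + (1 - mmax) * (1 - y0) := by
      nlinarith [mul_nonneg (by linarith : (0:ℝ) ≤ 1 - mmax) (by linarith : (0:ℝ) ≤ 1 - y0)]
    have hdUIeq : dUI a bP bU L CP CU mmax y0 0 * (y0 + (1 - mmax) * (1 - y0))
        = y0 * (CU - CP) - (1 - mmax) * (1 - y0) * (CP - (1 - a) * L * bP * y0) := by
      unfold dUI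
      field_simp
      ring
    have hdUIge : 0 ≤ dUI a bP bU L CP CU mmax y0 0 := by
      by_contra h
      push_neg at h
      have : dUI a bP bU L CP CU mmax y0 0 * (y0 + (1 - mmax) * (1 - y0)) < 0 :=
        mul_neg_of_neg_of_pos h hDpos
      rw [hdUIeq, ← hgf] at this
      linarith
    refine ⟨⟨?_, ?_⟩, ⟨zero_le_one, le_rfl⟩, ⟨le_rfl, zero_le_one⟩, ?_, rfl, ?_, ?_, ?_, ?_⟩
    · rw [hY]; exact hy0pos
    · rw [hY]; exact hy0lt1
    · rw [hbeq1]; exact hgb1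
    · intro h; exact absurd h (by linarith)
    · intro _; rfl
    · intro _; rfl
    · intro h; rw [hY] at h; exact absurd h (by linarith)
  · -- Part 2: minimality
    intro m hm y zS zI hsne
    obtain ⟨hm0, hm1⟩ := hm
    obtain ⟨⟨hyp, hy1⟩, ⟨hzS0, hzS1⟩, ⟨hzI0, hzI1⟩, hβ, hyeq, _, hc7, _, hc9⟩ := hsne
    have hzI1' : (0:ℝ) ≤ 1 - zI := by linarith
    have hm1' : (0:ℝ) ≤ 1 - m := by linarith
    have h1a : (0:ℝ) < 1 - a := by linarith
    obtain ⟨B, hBdef⟩ : ∃ t : ℝ, t = bP + (bU - bP) * zI := ⟨_, rfl⟩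
    have hBp : bP ≤ B := by
      rw [hBdef]
      have := mul_nonneg (by linarith : (0:ℝ) ≤ bU - bP) hzI0
      linarith
    have hBu : B ≤ bU := by
      rw [hBdef]
      have := mul_le_mul_of_nonneg_left hzI1 (by linarith : (0:ℝ) ≤ bU - bP)
      linarith
    have hBpos : 0 < B := lt_of_lt_of_le hbP hBp
    obtain ⟨s, hsdef⟩ : ∃ t : ℝ, t = a + (1 - a) * (zS * m + zI * (1 - m)) := ⟨_, rfl⟩
    have hsa : a ≤ s := by
      rw [hsdef]
      have p1 := mul_nonneg hzS0 hm0
      have p2 := mul_nonneg hzI0 hm1'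
      have := mul_nonneg h1a.le (by linarith : (0:ℝ) ≤ zS * m + zI * (1 - m))
      linarith
    have hspos : 0 < s := lt_of_lt_of_le ha0 hsa
    have hs1 : s ≤ 1 := by
      rw [hsdef]
      have p1 := mul_le_mul_of_nonneg_right hzS1 hm0
      have p2 := mul_le_mul_of_nonneg_right hzI1 hm1'
      have := mul_le_mul_of_nonneg_left (by linarith : zS * m + zI * (1 - m) ≤ 1) h1a.le
      linarith
    have hbeq : betaEff a bP bU zS zI m = B * s := by unfold betaEff; rw [hBdef, hsdef]
    rw [hbeq] at hβ
    have hys : y = 1 - gam / (B * s) := by rw [hyeq]; unfold yEE; rw [hbeq]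
    have hBspos : 0 < B * s := mul_pos hBpos hspos
    have hsgam : gam ≤ gam / s := by
      rw [le_div_iff₀ hspos]
      exact mul_le_of_le_one_right hg0.le hs1
    have hBy : B * y = B - gam / s := by
      rw [hys]; field_simp
    have hdUS : dUS a bP bU L CP y zI < 0 := by
      have h1 : (1 - a) * L * (B * y) ≤ (1 - a) * L * (bU - gam) :=
        mul_le_mul_of_nonneg_left (by rw [hBy]; linarith) haL
      unfold dUS
      have e : (1 - a) * L * (bP + (bU - bP) * zI) * y = (1 - a) * L * (B * y) := by
        rw [hBdef]; ring
      rw [e]; linarith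
    have hzSe : zS = 1 := hc7 hdUS
    have hs' : s = a + (1 - a) * (m + zI * (1 - m)) := by rw [hsdef, hzSe]; ring
    have hgc : gam < B * s := hβ
    have hcB : B * s ≤ B := mul_le_of_le_one_right hBpos.le hs1
    suffices hfin : bP * (a + (1 - a) * mmax) ≤ B * s by
      rw [hY, hys, hy0def]
      have : gam / (B * s) ≤ gam / (bP * (a + (1 - a) * mmax)) := by
        rw [div_le_div_iff₀ hBspos hb1pos]
        exact mul_le_mul_of_nonneg_left hfin hg0.le
      linarith
    rcases hmmax with ⟨_, hme⟩ | ⟨_, ⟨hmm0', hmm1'⟩, hgmm⟩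
    · rw [hme]
      have : bP * a ≤ B * s := mul_le_mul hBp hsa ha0.le hBpos.le
      linarith [this]
    · by_contra hcon
      push_neg at hcon
      rcases eq_or_lt_of_le hzI1 with hzIe | hzIlt
      · -- zI = 1 : B*s = bU, contradiction with hcon
        have hB1 : B = bU := by rw [hBdef, hzIe]; ring
        have hs1' : s = 1 := by rw [hs', hzIe]; ring
        rw [hB1, hs1'] at hcon
        have := mul_le_mul_of_nonneg_left hs01 hbP.le
        linarith
      · -- 0 ≤ zI < 1
        have hdUIge : 0 ≤ dUI a bP bU L CP CU m y zI := by
          by_contra h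
          push_neg at h
          exact absurd (hc9 h) (ne_of_lt hzIlt)
        have hDpos : 0 < y + (1 - m) * (1 - y) := by
          have := mul_nonneg hm1' (by linarith : (0:ℝ) ≤ 1 - y)
          linarith
        have hGeq : dUI a bP bU L CP CU m y zI * (y + (1 - m) * (1 - y))
            = y * (CU - CP) - (1 - m) * (1 - y) * (CP - (1 - a) * L * B * y) := by
          unfold dUI
          rw [hBdef]
          field_simp
          ring
        have hG : 0 ≤ y * (CU - CP) - (1 - m) * (1 - y) * (CP - (1 - a) * L * B * y) := by
          rw [← hGeq]; exact mul_nonneg hdUIge hDpos.le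
        obtain ⟨k, hkdef⟩ : ∃ t : ℝ, t = (1 - a) * L * y := ⟨_, rfl⟩
        have hk0 : 0 ≤ k := by
          rw [hkdef]
          exact mul_nonneg haL hyp.le
        have hcbU : B * s ≤ bU := hcB.trans hBu
        have hkbU : k * bU < CP := by
          have h1 : gam ≤ gam * bU / (B * s) := by
            rw [le_div_iff₀ hBspos]
            have : gam * (B * s) ≤ gam * bU := mul_le_mul_of_nonneg_left hcbU hg0.le
            linarith
          have h2 : y * bU = bU - gam * bU / (B * s) := by
            rw [hys]; field_simp
          have h3 : y * bU ≤ bU - gam := by linarith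
          have h4 : (1 - a) * L * (y * bU) ≤ (1 - a) * L * (bU - gam) :=
            mul_le_mul_of_nonneg_left h3 haL
          rw [hkdef]
          linarith [h4, hA2]
        have hcbP : B * s < bP := by
          have := mul_le_mul_of_nonneg_left hs01 hbP.le
          linarith [hcon, this]
        have hkey := keyD bU bP B (B * s) k CP hBspos hcbP.le hBp hBu hk0 hkbU hbP
        have hBc : B - B * s = (1 - a) * ((1 - m) * (1 - zI)) * B := by
          rw [hs']; ring
        have hUB : bU - B = (bU - bP) * (1 - zI) := by rw [hBdef]; ring
        obtain ⟨w, hwdef⟩ : ∃ t : ℝ, t = (bP - B * s) / ((1 - a) * bP) := ⟨_, rfl⟩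
        have habP : (0:ℝ) < (1 - a) * bP := mul_pos h1a hbP
        have hwc : bP - B * s = (1 - a) * bP * w := by
          rw [hwdef]; field_simp
        have hK : (0:ℝ) < (bU - bP) * bP * ((1 - a) * (1 - zI) * B) := by
          have h5 : (0:ℝ) < (1 - a) * (1 - zI) * B :=
            mul_pos (mul_pos h1a (by linarith)) hBpos
          exact mul_pos (mul_pos (by linarith) hbP) h5
        have hstep : w * (CP - k * bP) ≤ (1 - m) * (CP - k * B) := by
          have e1 : (bU - bP) * bP * (B - B * s) * (CP - k * B)
              = ((bU - bP) * bP * ((1 - a) * (1 - zI) * B)) * ((1 - m) * (CP - k * B)) := by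
            rw [hBc]; ring
          have e2 : (bU - B) * B * (bP - B * s) * (CP - k * bP)
              = ((bU - bP) * bP * ((1 - a) * (1 - zI) * B)) * (w * (CP - k * bP)) := by
            rw [hUB, hwc]; ring
          rw [e1, e2] at hkey
          exact le_of_mul_le_mul_left hkey hK
        have hyy0 : y < y0 := by
          have : gam / (bP * (a + (1 - a) * mmax)) < gam / (B * s) := by
            rw [div_lt_div_iff₀ hb1pos hBspos]
            exact mul_lt_mul_of_pos_left hcon hg0
          rw [hys, hy0def]; linarith
        have hw0 : 0 ≤ w := by
          rw [hwdef]
          exact div_nonneg (by linarith) habP.le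
        have hwm : 1 - mmax ≤ w := by
          rw [hwdef, le_div_iff₀ habP]
          linarith [hcon]
        have hCPk0 : 0 < CP - (1 - a) * L * bP * y0 := by linarith
        have hkk0 : k * bP ≤ (1 - a) * L * bP * y0 := by
          rw [hkdef]
          have := mul_le_mul_of_nonneg_left hyy0.le (mul_nonneg haL hbP.le)
          linarith [this]
        have hprod : (1 - mmax) * (1 - y0) * (CP - (1 - a) * L * bP * y0)
            ≤ w * (1 - y) * (CP - k * bP) := by
          have f2 : (0:ℝ) < 1 - y0 := by linarith
          have f3 : 1 - y0 ≤ 1 - y := by linarith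
          have f4 : CP - (1 - a) * L * bP * y0 ≤ CP - k * bP := by linarith
          have s1 : (1 - mmax) * (1 - y0) * (CP - (1 - a) * L * bP * y0)
              ≤ w * (1 - y0) * (CP - (1 - a) * L * bP * y0) := by
            apply mul_le_mul_of_nonneg_right _ hCPk0.le
            exact mul_le_mul_of_nonneg_right hwm f2.le
          have s2 : w * (1 - y0) * (CP - (1 - a) * L * bP * y0)
              ≤ w * (1 - y) * (CP - (1 - a) * L * bP * y0) := by
            apply mul_le_mul_of_nonneg_right _ hCPk0.le
            exact mul_le_mul_of_nonneg_left f3 hw0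
          have s3 : w * (1 - y) * (CP - (1 - a) * L * bP * y0)
              ≤ w * (1 - y) * (CP - k * bP) := by
            apply mul_le_mul_of_nonneg_left f4
            exact mul_nonneg hw0 (by linarith)
          linarith
        have hgfe : y0 * (CU - CP) - (1 - mmax) * (1 - y0) * (CP - (1 - a) * L * bP * y0)
            = 0 := by rw [← hgf]; exact hgmm
        have hGV : (1 - y) * (w * (CP - k * bP))
            ≤ (1 - m) * (1 - y) * (CP - (1 - a) * L * B * y) := by
          have h := mul_le_mul_of_nonneg_left hstep (by linarith : (0:ℝ) ≤ 1 - y)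
          have e : (1 - m) * (1 - y) * (CP - (1 - a) * L * B * y)
              = (1 - y) * ((1 - m) * (CP - k * B)) := by rw [hkdef]; ring
          rw [e]; exact h
        have hfin1 : y * (CU - CP) < y0 * (CU - CP) :=
          mul_lt_mul_of_pos_right hyy0 (by linarith)
        have e2' : (1 - y) * (w * (CP - k * bP)) = w * (1 - y) * (CP - k * bP) := by ring
        rw [e2'] at hGV
        linarith
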